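/- (Panda's reduction identity.) Let $k \geq 1$, $a_1,\dots,a_k > 0$, $x \geq 0$, and let $C : \mathbb{Z}_{\geq 0} \to \mathbb{R}$ be a sequence such that the single series $\sum_{j=0}^{\infty} |C(j)|\,(a_1+\cdots+a_k)_j\, x^j/j!$ converges. Then $\sum_{j_1=0}^{\infty}\cdots\sum_{j_k=0}^{\infty} C(j_1+\cdots+j_k)\,(a_1)_{j_1}\cdots(a_k)_{j_k}\,\dfrac{x^{j_1+\cdots+j_k}}{j_1!\cdots j_k!} = \sum_{j=0}^{\infty} C(j)\,(a_1+\cdots+a_k)_j\,\dfrac{x^j}{j!}$, where the multiple series on the left converges absolutely. -/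

import Mathlib

open scoped BigOperators
open MeasureTheory

/-- The rising factorial (Pochhammer symbol) `(a)_m = a (a+1) ⋯ (a+m-1)`. -/
noncomputable def risingFactorial (a : ℝ) (m : ℕ) : ℝ := (ascPochhammer ℝ m).eval a

/-- The classical Laguerre polynomial `L_n^{(α)}(x)`. -/
noncomputable def laguerreP (n : ℕ) (α : ℝ) (x : ℝ) : ℝ :=
  risingFactorial (α + 1) n / (Nat.factorial n : ℝ) *
    ∑ j ∈ Finset.range (n + 1),
      risingFactorial (-(n : ℝ)) j / risingFactorial (α + 1) j * x ^ j / (Nat.factorial j : ℝ)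

/-- Erdélyi's multivariate Laguerre polynomial `L_{n_1,…,n_k}^{(α)}(x_1,…,x_k)`. -/
noncomputable def mvLaguerre (k : ℕ) (α : ℝ) (n : Fin k → ℕ) (x : Fin k → ℝ) : ℝ :=
  risingFactorial (α + 1) (∑ i, n i) / (∏ i, (Nat.factorial (n i) : ℝ)) *
    ∑ j ∈ Fintype.piFinset (fun i => Finset.range (n i + 1)),
      (∏ i, risingFactorial (-(n i : ℝ)) (j i)) / risingFactorial (α + 1) (∑ i, j i) *
        ∏ i, x i ^ (j i) / (Nat.factorial (j i) : ℝ)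

/-- The confluent Lauricella function `Φ₂^{(k)}[b₁,…,b_k; c; x₁,…,x_k]`. -/
noncomputable def Phi2 (k : ℕ) (b : Fin k → ℝ) (c : ℝ) (x : Fin k → ℝ) : ℝ :=
  ∑' j : Fin k → ℕ,
    (∏ i, risingFactorial (b i) (j i)) / risingFactorial c (∑ i, j i) *
      ∏ i, x i ^ (j i) / (Nat.factorial (j i) : ℝ)

/-- The confluent hypergeometric function `₁F₁[a; c; x]`. -/
noncomputable def oneF1 (a c x : ℝ) : ℝ :=
  ∑' j : ℕ, risingFactorial a j / risingFactorial c j * x ^ j / (Nat.factorial j : ℝ)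

/-- Rooney's constant `q_n = √((2n)!) / (2^{n+1/2} n!)`. -/
noncomputable def qSeq (n : ℕ) : ℝ :=
  Real.sqrt (Nat.factorial (2 * n) : ℝ) /
    ((2 : ℝ) ^ ((n : ℝ) + 1 / 2) * (Nat.factorial n : ℝ))

/-- The open standard simplex `E_k ⊆ ℝ^k`. -/
def simplexE (k : ℕ) : Set (Fin k → ℝ) := {u | (∀ i, 0 < u i) ∧ ∑ i, u i < 1}

/-- The density of the Dirichlet measure `μ_{(b₁,…,b_k,β)}` with respect to
Lebesgue measure on the simplex `E_k`. -/
noncomputable def dirichletDensity (k : ℕ) (b : Fin k → ℝ) (β : ℝ) (u : Fin k → ℝ) : ℝ :=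
  Real.Gamma (∑ i, b i + β) / ((∏ i, Real.Gamma (b i)) * Real.Gamma β) *
    (∏ i, u i ^ (b i - 1)) * (1 - ∑ i, u i) ^ (β - 1)


/-! ### Auxiliary lemmas -/

lemma desc_smeval_eq_aux (r : ℝ) (n : ℕ) :
    (descPochhammer ℤ n).smeval r = (descPochhammer ℝ n).eval r := by
  rw [← Polynomial.aeval_eq_smeval, Polynomial.aeval_def, Polynomial.eval₂_eq_eval_map,
    descPochhammer_map]

lemma desc_neg_eq_aux (u : ℝ) (m : ℕ) :
    (descPochhammer ℝ m).eval (-u) = (-1) ^ m * risingFactorial u m := by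
  have h := ascPochhammer_eval_neg_eq_descPochhammer (R := ℝ) (-u) m
  rw [neg_neg] at h
  rw [risingFactorial, h, ← mul_assoc, ← mul_pow]
  norm_num

lemma rf_vandermonde (b c : ℝ) (n : ℕ) :
    ∑ p ∈ Finset.HasAntidiagonal.antidiagonal n,
      risingFactorial b p.1 / (Nat.factorial p.1 : ℝ) *
        (risingFactorial c p.2 / (Nat.factorial p.2 : ℝ)) =
    risingFactorial (b + c) n / (Nat.factorial n : ℝ) := by
  have hmul : risingFactorial (b + c) n =
      ∑ p ∈ Finset.HasAntidiagonal.antidiagonal n,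
        (n.choose p.1 : ℝ) * (risingFactorial b p.1 * risingFactorial c p.2) := by
    have h := Ring.descPochhammer_smeval_add (R := ℝ) (r := -b) (s := -c) n (Commute.all _ _)
    simp only [desc_smeval_eq_aux] at h
    have h0 : risingFactorial (b + c) n = (-1) ^ n * (descPochhammer ℝ n).eval (-b + -c) := by
      rw [← neg_add, desc_neg_eq_aux, ← mul_assoc, ← mul_pow]
      norm_num
    rw [h0, h, Finset.mul_sum]
    refine Finset.sum_congr rfl fun p hp => ?_
    have hpn : p.1 + p.2 = n := Finset.HasAntidiagonal.mem_antidiagonal.mp hp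
    rw [desc_neg_eq_aux, desc_neg_eq_aux, ← hpn, pow_add]
    ring_nf
    rw [mul_comm p.1 2, mul_comm p.2 2, pow_mul, pow_mul]
    norm_num
  rw [hmul, Finset.sum_div]
  refine Finset.sum_congr rfl fun p hp => ?_
  have hpn : p.1 + p.2 = n := Finset.HasAntidiagonal.mem_antidiagonal.mp hp
  have hfac : (n.choose p.1 : ℝ) * (Nat.factorial p.1 : ℝ) * (Nat.factorial p.2 : ℝ)
      = (Nat.factorial n : ℝ) := by
    rw_mod_cast [← Nat.choose_mul_factorial_mul_factorial (Nat.le.intro hpn)]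
    congr 2
    omega
  have h1 : (Nat.factorial p.1 : ℝ) ≠ 0 := Nat.cast_ne_zero.mpr (Nat.factorial_ne_zero _)
  have h2 : (Nat.factorial p.2 : ℝ) ≠ 0 := Nat.cast_ne_zero.mpr (Nat.factorial_ne_zero _)
  have h3 : (Nat.factorial n : ℝ) ≠ 0 := Nat.cast_ne_zero.mpr (Nat.factorial_ne_zero _)
  have h4 : (n.choose p.1 : ℝ) ≠ 0 :=
    Nat.cast_ne_zero.mpr (Nat.choose_pos (Nat.le.intro hpn)).ne'
  rw [← hfac]
  field_simp

lemma rf_multinomial {ι : Type*} [DecidableEq ι] (a : ι → ℝ) (s : Finset ι) (n : ℕ) :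
    ∑ j ∈ s.piAntidiag n, ∏ i ∈ s, (risingFactorial (a i) (j i) / ((j i).factorial : ℝ))
      = risingFactorial (∑ i ∈ s, a i) n / (n.factorial : ℝ) := by
  induction s using Finset.cons_induction generalizing n with
  | empty =>
    rcases Nat.eq_zero_or_pos n with rfl | hn
    · simp [risingFactorial]
    · rw [Finset.piAntidiag_empty_of_ne_zero hn.ne']
      simp [risingFactorial, ascPochhammer_ne_zero_eval_zero (S := ℝ) hn.ne']
  | cons i s hi ih =>
    rw [Finset.piAntidiag_cons hi, Finset.sum_disjiUnion]
    have hstep : ∀ p ∈ Finset.HasAntidiagonal.antidiagonal n,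
        ∑ j ∈ (s.piAntidiag p.2).map
            (addRightEmbedding fun t => if t = i then p.1 else 0),
          ∏ t ∈ Finset.cons i s hi,
            (risingFactorial (a t) (j t) / ((j t).factorial : ℝ))
        = risingFactorial (a i) p.1 / (p.1.factorial : ℝ) *
            (risingFactorial (∑ t ∈ s, a t) p.2 / (p.2.factorial : ℝ)) := by
      intro p _
      rw [Finset.sum_map, ← ih, Finset.mul_sum]
      refine Finset.sum_congr rfl fun g hg => ?_
      have hgi : g i = 0 := by
        by_contra h
        exact hi ((Finset.mem_piAntidiag.mp hg).2 i h)
      rw [Finset.prod_cons]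
      have h1 : (addRightEmbedding fun t => if t = i then p.1 else 0) g i = p.1 := by
        simp [addRightEmbedding, hgi]
      have h2 : ∀ t ∈ s, (addRightEmbedding fun t => if t = i then p.1 else 0) g t = g t := by
        intro t ht
        have : t ≠ i := fun h => hi (h ▸ ht)
        simp [addRightEmbedding, this]
      rw [h1]
      congr 1
      exact Finset.prod_congr rfl fun t ht => by rw [h2 t ht]
    rw [Finset.sum_congr rfl hstep, rf_vandermonde, Finset.sum_cons]

/-- Panda's reduction identity for multiple series. -/
theorem panda_reduction (k : ℕ) (hk : 1 ≤ k) (a : Fin k → ℝ) (ha : ∀ i, 0 < a i)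
    (x : ℝ) (hx : 0 ≤ x) (C : ℕ → ℝ)
    (hC : Summable fun j : ℕ =>
      |C j| * risingFactorial (∑ i, a i) j * x ^ j / (Nat.factorial j : ℝ)) :
    (Summable fun j : Fin k → ℕ =>
        |C (∑ i, j i) * (∏ i, risingFactorial (a i) (j i)) * x ^ (∑ i, j i) /
          ∏ i, (Nat.factorial (j i) : ℝ)|) ∧
      ∑' j : Fin k → ℕ, C (∑ i, j i) * (∏ i, risingFactorial (a i) (j i)) *
          x ^ (∑ i, j i) / ∏ i, (Nat.factorial (j i) : ℝ) =
        ∑' j : ℕ, C j * risingFactorial (∑ i, a i) j * x ^ j / (Nat.factorial j : ℝ) := by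
  classical
  set F : (Fin k → ℕ) → ℝ := fun j =>
    C (∑ i, j i) * (∏ i, risingFactorial (a i) (j i)) * x ^ (∑ i, j i) /
      ∏ i, (Nat.factorial (j i) : ℝ) with hF
  have key : ∀ n : ℕ, ∑ j ∈ Finset.Nat.antidiagonalTuple k n,
      (∏ i, risingFactorial (a i) (j i)) / ∏ i, ((j i).factorial : ℝ)
      = risingFactorial (∑ i, a i) n / (n.factorial : ℝ) := by
    intro n
    have h := rf_multinomial a Finset.univ n
    rw [Finset.piAntidiag_univ_fin_eq_antidiagonalTuple] at h
    rw [← h]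
    exact Finset.sum_congr rfl fun j _ => (Finset.prod_div_distrib _ _).symm
  have fiber : ∀ (D : ℕ → ℝ) (n : ℕ),
      ∑ j ∈ Finset.Nat.antidiagonalTuple k n,
        D (∑ i, j i) * (∏ i, risingFactorial (a i) (j i)) * x ^ (∑ i, j i) /
          ∏ i, ((j i).factorial : ℝ)
      = D n * risingFactorial (∑ i, a i) n * x ^ n / (n.factorial : ℝ) := by
    intro D n
    have step1 : ∑ j ∈ Finset.Nat.antidiagonalTuple k n,
        D (∑ i, j i) * (∏ i, risingFactorial (a i) (j i)) * x ^ (∑ i, j i) /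
          ∏ i, ((j i).factorial : ℝ)
        = ∑ j ∈ Finset.Nat.antidiagonalTuple k n,
          D n * x ^ n * ((∏ i, risingFactorial (a i) (j i)) / ∏ i, ((j i).factorial : ℝ)) := by
      refine Finset.sum_congr rfl fun j hj => ?_
      rw [Finset.Nat.mem_antidiagonalTuple.mp hj]
      ring
    rw [step1, ← Finset.mul_sum, key n]
    ring
  have hrfpos : ∀ (i : Fin k) (m : ℕ), 0 < risingFactorial (a i) m :=
    fun i m => ascPochhammer_pos m (a i) (ha i)
  have habs : ∀ j : Fin k → ℕ, |F j| =
      |C (∑ i, j i)| * (∏ i, risingFactorial (a i) (j i)) * x ^ (∑ i, j i) /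
        ∏ i, ((j i).factorial : ℝ) := by
    intro j
    have h1 : (0:ℝ) < ∏ i, risingFactorial (a i) (j i) :=
      Finset.prod_pos fun i _ => hrfpos i _
    have h2 : (0:ℝ) < ∏ i, ((j i).factorial : ℝ) :=
      Finset.prod_pos fun i _ => Nat.cast_pos.mpr (Nat.factorial_pos _)
    have h3 : (0:ℝ) ≤ x ^ (∑ i, j i) := pow_nonneg hx _
    rw [hF, abs_div, abs_mul, abs_mul, abs_of_pos h1, abs_of_nonneg h3, abs_of_pos h2]
  set e := Finset.Nat.sigmaAntidiagonalTupleEquivTuple k with he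
  have hfibera : ∀ n : ℕ,
      ∑' j : (Finset.Nat.antidiagonalTuple k n : Finset (Fin k → ℕ)),
        |F (e ⟨n, j⟩)| = |C n| * risingFactorial (∑ i, a i) n * x ^ n /
          (n.factorial : ℝ) := by
    intro n
    have h0 : ∀ j : (Finset.Nat.antidiagonalTuple k n : Finset (Fin k → ℕ)),
        |F (e ⟨n, j⟩)| = |F (j : Fin k → ℕ)| := fun j => rfl
    rw [tsum_congr h0,
      Finset.tsum_subtype (Finset.Nat.antidiagonalTuple k n) (fun y => |F y|),
      Finset.sum_congr rfl fun j (_ : j ∈ _) => habs j]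
    exact fiber (fun n => |C n|) n
  have habsSummable : Summable fun j : Fin k → ℕ => |F j| := by
    rw [← (Equiv.summable_iff e)]
    apply (summable_sigma_of_nonneg fun σ => abs_nonneg _).mpr
    refine ⟨fun n => Summable.of_finite, ?_⟩
    exact Summable.congr hC fun n => (hfibera n).symm
  have hFsummable : Summable F := summable_abs_iff.mp habsSummable
  refine ⟨habsSummable, ?_⟩
  have hsig : Summable fun σ : Σ n : ℕ,
      (Finset.Nat.antidiagonalTuple k n : Finset (Fin k → ℕ)) => F (e σ) :=
    (Equiv.summable_iff (f := F) e).mpr hFsummable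
  calc ∑' j : Fin k → ℕ, F j
      = ∑' σ : Σ n : ℕ, (Finset.Nat.antidiagonalTuple k n : Finset (Fin k → ℕ)),
          F (e σ) := (Equiv.tsum_eq e F).symm
    _ = ∑' n : ℕ, ∑' j : (Finset.Nat.antidiagonalTuple k n : Finset (Fin k → ℕ)),
          F (e ⟨n, j⟩) := Summable.tsum_sigma hsig
    _ = ∑' n : ℕ, C n * risingFactorial (∑ i, a i) n * x ^ n / (n.factorial : ℝ) := by
        refine tsum_congr fun n => ?_
        have h0 : ∀ j : (Finset.Nat.antidiagonalTuple k n : Finset (Fin k → ℕ)),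
            F (e ⟨n, j⟩) = F (j : Fin k → ℕ) := fun j => rfl
        rw [tsum_congr h0,
          Finset.tsum_subtype (Finset.Nat.antidiagonalTuple k n) (fun y => F y)]
        exact fiber C n
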